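/- The Fisher–Rao geodesic has constant speed: let f₁, f₂ ∈ 𝒫 with f₁ ≠ f₂, set θ = d_R(f₁, f₂) ∈ (0, π/2], and define α(τ)(ω) = ((sin((1−τ)θ)/sin θ)·√(f₁(ω)) + (sin(τθ)/sin θ)·√(f₂(ω)))² for τ ∈ [0,1]. Then for all τ₁, τ₂ ∈ [0,1], d_R(α(τ₁), α(τ₂)) = |τ₁ − τ₂| · θ; in particular the path α realizes the distance d_R(f₁, f₂). -/

import Mathlib

open MeasureTheory intervalIntegral Set

noncomputable section

/-- A warping function: a continuously differentiable map of `[0,1]` onto itself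
fixing the endpoints, with strictly positive derivative. -/
structure IsWarping (β : ℝ → ℝ) : Prop where
  mapsTo : ∀ ω ∈ Icc (0:ℝ) 1, β ω ∈ Icc (0:ℝ) 1
  zero : β 0 = 0
  one : β 1 = 1
  hasDeriv : ∀ ω ∈ Icc (0:ℝ) 1, HasDerivAt β (deriv β ω) ω
  contDeriv : ContinuousOn (deriv β) (Icc (0:ℝ) 1)
  derivPos : ∀ ω ∈ Icc (0:ℝ) 1, 0 < deriv β ω

/-- The action `(f ⊙ β)(ω) = f(β(ω)) · β'(ω)`. -/
def act (f β : ℝ → ℝ) : ℝ → ℝ := fun ω => f (β ω) * deriv β ω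

/-- A continuous probability density function on `[0,1]`. -/
def IsDensity (f : ℝ → ℝ) : Prop :=
  ContinuousOn f (Icc (0:ℝ) 1) ∧ (∀ ω ∈ Icc (0:ℝ) 1, 0 ≤ f ω) ∧
    (∫ ω in (0:ℝ)..1, f ω) = 1

/-- The Hellinger distance between two densities on `[0,1]`. -/
def Hdist (f₁ f₂ : ℝ → ℝ) : ℝ :=
  Real.sqrt ((1/2) * ∫ ω in (0:ℝ)..1, (Real.sqrt (f₁ ω) - Real.sqrt (f₂ ω))^2)

/-- The Fisher–Rao (Riemannian) distance between two densities on `[0,1]`. -/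
def dR (f₁ f₂ : ℝ → ℝ) : ℝ :=
  Real.arccos (∫ ω in (0:ℝ)..1, Real.sqrt (f₁ ω) * Real.sqrt (f₂ ω))


/-- The Fisher–Rao geodesic path between two densities. -/
def geo (f₁ f₂ : ℝ → ℝ) (τ ω : ℝ) : ℝ :=
  (Real.sin ((1 - τ) * dR f₁ f₂) / Real.sin (dR f₁ f₂) * Real.sqrt (f₁ ω)
    + Real.sin (τ * dR f₁ f₂) / Real.sin (dR f₁ f₂) * Real.sqrt (f₂ ω))^2

/-- the Fisher–Rao geodesic has constant speed. -/
lemma trig_key (θ τ₁ τ₂ : ℝ) (hs : Real.sin θ ≠ 0) :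
    Real.sin ((1-τ₁)*θ)/Real.sin θ * (Real.sin ((1-τ₂)*θ)/Real.sin θ)
    + Real.sin (τ₁*θ)/Real.sin θ * (Real.sin (τ₂*θ)/Real.sin θ)
    + (Real.sin ((1-τ₁)*θ)/Real.sin θ * (Real.sin (τ₂*θ)/Real.sin θ)
       + Real.sin (τ₁*θ)/Real.sin θ * (Real.sin ((1-τ₂)*θ)/Real.sin θ)) * Real.cos θ
    = Real.cos ((τ₁ - τ₂)*θ) := by
  rw [show (1-τ₁)*θ = θ - τ₁*θ by ring, show (1-τ₂)*θ = θ - τ₂*θ by ring,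
    show (τ₁-τ₂)*θ = τ₁*θ - τ₂*θ by ring, Real.sin_sub, Real.sin_sub, Real.cos_sub]
  have h1 := Real.sin_sq_add_cos_sq θ
  field_simp
  ring_nf
  linear_combination (-(Real.sin (τ₁*θ) * Real.sin (θ*τ₂))) * h1

lemma cOn_ii {g : ℝ → ℝ} (h : ContinuousOn g (Icc (0:ℝ) 1)) :
    IntervalIntegrable g volume 0 1 := by
  apply ContinuousOn.intervalIntegrable
  rwa [uIcc_of_le (by norm_num : (0:ℝ) ≤ 1)]

theorem geo_constant_speed (f₁ f₂ : ℝ → ℝ)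
    (h₁ : IsDensity f₁) (h₂ : IsDensity f₂)
    (hne : ∃ ω ∈ Icc (0:ℝ) 1, f₁ ω ≠ f₂ ω) :
    ∀ τ₁ ∈ Icc (0:ℝ) 1, ∀ τ₂ ∈ Icc (0:ℝ) 1,
      dR (geo f₁ f₂ τ₁) (geo f₁ f₂ τ₂) = |τ₁ - τ₂| * dR f₁ f₂ := by
  obtain ⟨hc₁, hnn₁, hint₁⟩ := h₁
  obtain ⟨hc₂, hnn₂, hint₂⟩ := h₂
  have hcs₁ : ContinuousOn (fun ω => Real.sqrt (f₁ ω)) (Icc (0:ℝ) 1) :=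
    Real.continuous_sqrt.comp_continuousOn hc₁
  have hcs₂ : ContinuousOn (fun ω => Real.sqrt (f₂ ω)) (Icc (0:ℝ) 1) :=
    Real.continuous_sqrt.comp_continuousOn hc₂
  have hiI : IntervalIntegrable (fun ω => Real.sqrt (f₁ ω) * Real.sqrt (f₂ ω)) volume 0 1 :=
    cOn_ii (hcs₁.mul hcs₂)
  have hif₁ : IntervalIntegrable f₁ volume 0 1 := cOn_ii hc₁
  have hif₂ : IntervalIntegrable f₂ volume 0 1 := cOn_ii hc₂
  set I := ∫ ω in (0:ℝ)..1, Real.sqrt (f₁ ω) * Real.sqrt (f₂ ω) with hIdef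
  have hI0 : 0 ≤ I := intervalIntegral.integral_nonneg (by norm_num)
    (fun x _ => mul_nonneg (Real.sqrt_nonneg _) (Real.sqrt_nonneg _))
  -- the squared Hellinger integrand
  have hg : ContinuousOn (fun ω => (Real.sqrt (f₁ ω) - Real.sqrt (f₂ ω))^2) (Icc (0:ℝ) 1) :=
    (hcs₁.sub hcs₂).pow 2
  have hJexp : (∫ ω in (0:ℝ)..1, (Real.sqrt (f₁ ω) - Real.sqrt (f₂ ω))^2) = 2 - 2*I := by
    have hEq : EqOn (fun ω => (Real.sqrt (f₁ ω) - Real.sqrt (f₂ ω))^2)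
        (fun ω => f₁ ω + f₂ ω - 2*(Real.sqrt (f₁ ω) * Real.sqrt (f₂ ω)))
        (uIcc (0:ℝ) 1) := by
      intro ω hω
      rw [uIcc_of_le (by norm_num : (0:ℝ) ≤ 1)] at hω
      have e1 : Real.sqrt (f₁ ω) ^ 2 = f₁ ω := Real.sq_sqrt (hnn₁ ω hω)
      have e2 : Real.sqrt (f₂ ω) ^ 2 = f₂ ω := Real.sq_sqrt (hnn₂ ω hω)
      simp only
      linear_combination e1 + e2
    rw [intervalIntegral.integral_congr hEq,
      intervalIntegral.integral_sub (hif₁.add hif₂) (hiI.const_mul 2),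
      intervalIntegral.integral_add hif₁ hif₂,
      intervalIntegral.integral_const_mul, hint₁, hint₂]
    ring
  -- strict positivity of the Hellinger integral
  obtain ⟨ω₀, hω₀, hne₀⟩ := hne
  have hgω₀ : 0 < (Real.sqrt (f₁ ω₀) - Real.sqrt (f₂ ω₀))^2 := by
    have hs : Real.sqrt (f₁ ω₀) ≠ Real.sqrt (f₂ ω₀) := by
      intro h
      apply hne₀
      have := congrArg (· ^ 2) h
      rwa [Real.sq_sqrt (hnn₁ ω₀ hω₀), Real.sq_sqrt (hnn₂ ω₀ hω₀)] at this
    have h' : Real.sqrt (f₁ ω₀) - Real.sqrt (f₂ ω₀) ≠ 0 := sub_ne_zero.2 hs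
    positivity
  have hJpos : 0 < ∫ ω in (0:ℝ)..1, (Real.sqrt (f₁ ω) - Real.sqrt (f₂ ω))^2 := by
    rw [intervalIntegral.integral_pos_iff_support_of_nonneg_ae
      (Filter.Eventually.of_forall fun x => sq_nonneg _) (cOn_ii hg)]
    refine ⟨by norm_num, ?_⟩
    obtain ⟨δ, hδ, hball⟩ := Metric.continuousWithinAt_iff.1 (hg ω₀ hω₀) _ hgω₀
    set c := max 0 (ω₀ - δ/2) with hc
    set d := min 1 (ω₀ + δ/2) with hd
    have hcd : c < d := by
      apply max_lt <;> apply lt_min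
      · norm_num
      · linarith [hω₀.1]
      · linarith [hω₀.2]
      · linarith
    have hsub : Ioo c d ⊆
        Function.support (fun ω => (Real.sqrt (f₁ ω) - Real.sqrt (f₂ ω))^2) ∩ Ioc 0 1 := by
      intro x hx
      have hx0 : (0:ℝ) < x := lt_of_le_of_lt (le_max_left _ _) hx.1
      have hx1 : x ≤ 1 := hx.2.le.trans (min_le_left _ _)
      have hxIcc : x ∈ Icc (0:ℝ) 1 := ⟨hx0.le, hx1⟩
      have hdist : dist x ω₀ < δ := by
        rw [Real.dist_eq, abs_lt]
        constructor
        · have := lt_of_le_of_lt (le_max_right 0 (ω₀ - δ/2)) hx.1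
          linarith
        · have := lt_of_lt_of_le hx.2 (min_le_right 1 (ω₀ + δ/2))
          linarith
      have hclose := hball hxIcc hdist
      rw [Real.dist_eq, abs_lt] at hclose
      refine ⟨?_, hx0, hx1⟩
      simp only [Function.mem_support]
      intro h0
      rw [h0] at hclose
      linarith [hclose.1]
    calc (0:ENNReal) < volume (Ioo c d) := by
          rw [Real.volume_Ioo]
          simpa using sub_pos.2 hcd
      _ ≤ _ := measure_mono hsub
  have hI1 : I < 1 := by linarith [hJexp ▸ hJpos]
  set θ := dR f₁ f₂ with hθdef
  have hθarc : θ = Real.arccos I := rfl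
  have hθpos : 0 < θ := by rw [hθarc]; exact Real.arccos_pos.2 hI1
  have hθle : θ ≤ Real.pi / 2 := by rw [hθarc]; exact Real.arccos_le_pi_div_two.2 hI0
  have hcosθ : Real.cos θ = I := by rw [hθarc]; exact Real.cos_arccos (by linarith) hI1.le
  have hsθ : 0 < Real.sin θ :=
    Real.sin_pos_of_pos_of_lt_pi hθpos (by linarith [Real.pi_pos])
  intro τ₁ hτ₁ τ₂ hτ₂
  have hsinnn : ∀ τ ∈ Icc (0:ℝ) 1, 0 ≤ Real.sin (τ * θ) := by
    intro τ hτ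
    apply Real.sin_nonneg_of_nonneg_of_le_pi (mul_nonneg hτ.1 hθpos.le)
    nlinarith [Real.pi_pos, hτ.1, hτ.2]
  have hmem : ∀ τ ∈ Icc (0:ℝ) 1, (1 - τ) ∈ Icc (0:ℝ) 1 := by
    intro τ hτ; exact ⟨by linarith [hτ.2], by linarith [hτ.1]⟩
  have hsqrtgeo : ∀ τ ∈ Icc (0:ℝ) 1, ∀ ω, Real.sqrt (geo f₁ f₂ τ ω)
      = Real.sin ((1-τ)*θ)/Real.sin θ * Real.sqrt (f₁ ω)
        + Real.sin (τ*θ)/Real.sin θ * Real.sqrt (f₂ ω) := by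
    intro τ hτ ω
    simp only [geo, ← hθdef]
    exact Real.sqrt_sq (add_nonneg
      (mul_nonneg (div_nonneg (hsinnn _ (hmem τ hτ)) hsθ.le) (Real.sqrt_nonneg _))
      (mul_nonneg (div_nonneg (hsinnn _ hτ) hsθ.le) (Real.sqrt_nonneg _)))
  set a₁ := Real.sin ((1-τ₁)*θ)/Real.sin θ with ha₁
  set a₂ := Real.sin ((1-τ₂)*θ)/Real.sin θ with ha₂
  set b₁ := Real.sin (τ₁*θ)/Real.sin θ with hb₁
  set b₂ := Real.sin (τ₂*θ)/Real.sin θ with hb₂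
  have hkey : (∫ ω in (0:ℝ)..1, Real.sqrt (geo f₁ f₂ τ₁ ω) * Real.sqrt (geo f₁ f₂ τ₂ ω))
      = Real.cos ((τ₁ - τ₂)*θ) := by
    have hEq : EqOn (fun ω => Real.sqrt (geo f₁ f₂ τ₁ ω) * Real.sqrt (geo f₁ f₂ τ₂ ω))
        (fun ω => (a₁*a₂) * f₁ ω + (b₁*b₂) * f₂ ω
          + (a₁*b₂ + b₁*a₂) * (Real.sqrt (f₁ ω) * Real.sqrt (f₂ ω))) (uIcc (0:ℝ) 1) := by
      intro ω hω
      rw [uIcc_of_le (by norm_num : (0:ℝ) ≤ 1)] at hω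
      simp only
      rw [hsqrtgeo τ₁ hτ₁ ω, hsqrtgeo τ₂ hτ₂ ω, ← ha₁, ← ha₂, ← hb₁, ← hb₂]
      have e1 : Real.sqrt (f₁ ω) * Real.sqrt (f₁ ω) = f₁ ω := Real.mul_self_sqrt (hnn₁ ω hω)
      have e2 : Real.sqrt (f₂ ω) * Real.sqrt (f₂ ω) = f₂ ω := Real.mul_self_sqrt (hnn₂ ω hω)
      linear_combination (a₁*a₂) * e1 + (b₁*b₂) * e2
    rw [intervalIntegral.integral_congr hEq,
      intervalIntegral.integral_add ((hif₁.const_mul _).add (hif₂.const_mul _)) (hiI.const_mul _),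
      intervalIntegral.integral_add (hif₁.const_mul _) (hif₂.const_mul _),
      intervalIntegral.integral_const_mul, intervalIntegral.integral_const_mul,
      intervalIntegral.integral_const_mul, hint₁, hint₂, ← hIdef, ← hcosθ,
      ha₁, ha₂, hb₁, hb₂]
    rw [show ∀ x y z : ℝ, x * 1 + y * 1 + z = x + y + z from fun x y z => by ring]
    exact trig_key θ τ₁ τ₂ hsθ.ne'
  have habs : |τ₁ - τ₂| ≤ 1 := by
    exact abs_le.2 ⟨by linarith [hτ₁.1, hτ₂.2], by linarith [hτ₁.2, hτ₂.1]⟩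
  have : dR (geo f₁ f₂ τ₁) (geo f₁ f₂ τ₂)
      = Real.arccos (Real.cos ((τ₁ - τ₂)*θ)) := by rw [dR, hkey]
  rw [this, ← Real.cos_abs, abs_mul, abs_of_nonneg hθpos.le,
    Real.arccos_cos (mul_nonneg (abs_nonneg _) hθpos.le) ?_]
  nlinarith [Real.pi_pos, abs_nonneg (τ₁ - τ₂)]
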